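/- Suppose f ∈ C^m(ℝⁿ) (m ≥ 2 finite) is convex on ℝⁿ and C ⊆ ℝⁿ is compact. Then f satisfies condition (CW^m) on C: for every ε > 0 there exists t_ε > 0 such that D²f(y)(v²) + t D³f(y)(w,v²) + … + (t^{m−2}/(m−2)!) D^m f(y)(w^{m−2},v²) ≥ −ε t^{m−2} for all y ∈ C, all unit v, w, and 0 < t ≤ t_ε. -/

import Mathlib

open Set

section Aux

variable {E F : Type*} [NormedAddCommGroup E] [NormedSpace ℝ E]
  [NormedAddCommGroup F] [NormedSpace ℝ F]

lemma my_fderiv_comp_const_add (G : E → F) (a x : E) :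
    fderiv ℝ (fun z => G (a + z)) x = fderiv ℝ G (a + x) := by
  by_cases h : DifferentiableAt ℝ G (a + x)
  · have h1 : HasFDerivAt (fun z : E => a + z) (ContinuousLinearMap.id ℝ E) x := by
      simpa using (hasFDerivAt_id x).const_add a
    have h2 := (h.hasFDerivAt.comp x h1).fderiv
    simpa [Function.comp_def] using h2
  · rw [fderiv_zero_of_not_differentiableAt h, fderiv_zero_of_not_differentiableAt]
    intro hc
    apply h
    have hinner : DifferentiableAt ℝ (fun z : E => z - a) (a + x) :=
      differentiableAt_id.sub_const a
    have hc' : DifferentiableAt ℝ (fun z => G (a + z)) ((fun z : E => z - a) (a + x)) := by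
      simpa using hc
    have h2 := hc'.comp (a + x) hinner
    have h3 : ((fun z => G (a + z)) ∘ fun z : E => z - a) = G := by
      funext z; simp
    rwa [h3] at h2

lemma my_iteratedFDeriv_comp_const_add (G : E → F) (a : E) :
    ∀ (j : ℕ) (x : E),
      iteratedFDeriv ℝ j (fun z => G (a + z)) x = iteratedFDeriv ℝ j G (a + x)
  | 0, x => by ext m; simp
  | (j+1), x => by
    rw [iteratedFDeriv_succ_eq_comp_left, iteratedFDeriv_succ_eq_comp_left]
    simp only [Function.comp_apply]
    congr 1
    rw [show (iteratedFDeriv ℝ j fun z => G (a + z)) = fun x => iteratedFDeriv ℝ j G (a + x)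
      from funext fun x => my_iteratedFDeriv_comp_const_add G a j x]
    exact my_fderiv_comp_const_add _ a x

lemma my_iteratedDeriv_comp_line (u : E → ℝ) {M : ℕ} (hu : ContDiff ℝ (M : ℕ∞) u)
    {j : ℕ} (hj : j ≤ M) (y w : E) (t₀ : ℝ) :
    iteratedDeriv j (fun t : ℝ => u (y + t • w)) t₀
      = iteratedFDeriv ℝ j u (y + t₀ • w) (fun _ => w) := by
  set L : ℝ →L[ℝ] E := (ContinuousLinearMap.id ℝ ℝ).smulRight w with hLdef
  have hu1 : ContDiff ℝ (M : ℕ∞) (fun z => u (y + z)) :=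
    hu.comp (contDiff_const.add contDiff_id)
  have hcomp : (fun t : ℝ => u (y + t • w)) = (fun z => u (y + z)) ∘ L := rfl
  rw [hcomp, iteratedDeriv_eq_iteratedFDeriv,
    ContinuousLinearMap.iteratedFDeriv_comp_right L hu1 t₀ (by exact_mod_cast hj)]
  rw [ContinuousMultilinearMap.compContinuousLinearMap_apply]
  have hL1 : L (1 : ℝ) = w := by simp [hLdef]
  have hLt : L t₀ = t₀ • w := by simp [hLdef]
  rw [show (fun i : Fin j => L 1) = fun _ : Fin j => w from funext fun _ => hL1, hLt,
    my_iteratedFDeriv_comp_const_add u y j (t₀ • w)]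

lemma my_inner_iterated (f : E → ℝ) {M : ℕ} (hf : ContDiff ℝ (M : ℕ∞) f) (v : E)
    {j : ℕ} (hj : j + 2 ≤ M) (y w : E) :
    iteratedFDeriv ℝ j (fun x => fderiv ℝ (fun x' => fderiv ℝ f x' v) x v) y (fun _ => w)
      = iteratedFDeriv ℝ (j + 2) f y (fun i => if (i : ℕ) < j then w else v) := by
  have hfd1 : ContDiff ℝ ((j + 1 : ℕ) : ℕ∞) (fderiv ℝ f) :=
    hf.fderiv_right (by exact_mod_cast hj)
  have hA : ContDiff ℝ ((j + 1 : ℕ) : ℕ∞) (fun x => fderiv ℝ f x v) :=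
    (ContinuousLinearMap.apply ℝ ℝ v).contDiff.comp hfd1
  have hfd2 : ContDiff ℝ ((j : ℕ) : ℕ∞) (fderiv ℝ (fun x => fderiv ℝ f x v)) :=
    hA.fderiv_right (by exact_mod_cast le_refl (j+1))
  have e4 : iteratedFDeriv ℝ j (fun x => fderiv ℝ (fun x' => fderiv ℝ f x' v) x v) y (fun _ => w)
      = (iteratedFDeriv ℝ j (fderiv ℝ (fun x => fderiv ℝ f x v)) y (fun _ => w)) v := by
    have hc : (fun x => fderiv ℝ (fun x' => fderiv ℝ f x' v) x v)
        = (ContinuousLinearMap.apply ℝ ℝ v) ∘ (fderiv ℝ (fun x => fderiv ℝ f x v)) := rfl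
    rw [hc, ContinuousLinearMap.iteratedFDeriv_comp_left _ hfd2.contDiffAt (by exact_mod_cast le_refl j)]
    rfl
  have e3 : iteratedFDeriv ℝ (j + 1) (fun x => fderiv ℝ f x v) y
        (fun i : Fin (j+1) => if (i : ℕ) < j then w else v)
      = (iteratedFDeriv ℝ j (fderiv ℝ (fun x => fderiv ℝ f x v)) y (fun _ => w)) v := by
    have hinit : Fin.init (fun i : Fin (j+1) => if (i : ℕ) < j then w else v)
        = fun _ : Fin j => w := by
      funext i; simp [Fin.init, i.isLt]
    rw [iteratedFDeriv_succ_apply_right, hinit]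
    simp [Fin.val_last]
  have e2 : iteratedFDeriv ℝ (j + 1) (fun x => fderiv ℝ f x v) y
        (fun i : Fin (j+1) => if (i : ℕ) < j then w else v)
      = (iteratedFDeriv ℝ (j + 1) (fderiv ℝ f) y
          (fun i : Fin (j+1) => if (i : ℕ) < j then w else v)) v := by
    have hc : (fun x => fderiv ℝ f x v)
        = (ContinuousLinearMap.apply ℝ ℝ v) ∘ (fderiv ℝ f) := rfl
    rw [hc, ContinuousLinearMap.iteratedFDeriv_comp_left _ hfd1.contDiffAt (by exact_mod_cast le_refl (j+1))]
    rfl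
  have e1 : iteratedFDeriv ℝ (j + 2) f y (fun i => if (i : ℕ) < j then w else v)
      = (iteratedFDeriv ℝ (j + 1) (fderiv ℝ f) y
          (fun i : Fin (j+1) => if (i : ℕ) < j then w else v)) v := by
    have hinit : Fin.init (fun i : Fin (j+2) => if (i : ℕ) < j then w else v)
        = fun i : Fin (j+1) => if (i : ℕ) < j then w else v := by
      funext i; simp [Fin.init]
    have h : ¬ (j + 1 < j) := by omega
    rw [iteratedFDeriv_succ_apply_right, hinit]
    simp [Fin.val_last, h]
  rw [e4, ← e3, e2, ← e1]

lemma my_mono_deriv_nonneg {ψ : ℝ → ℝ} (hm : Monotone ψ) {x : ℝ}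
    (hd : DifferentiableAt ℝ ψ x) : 0 ≤ deriv ψ x := by
  have h := (hd.hasDerivAt.hasDerivWithinAt (s := Set.Ioi x))
  rw [hasDerivWithinAt_iff_tendsto_slope] at h
  have hset : Ioi x \ {x} = Ioi x := Set.diff_singleton_eq_self (by simp)
  rw [hset] at h
  refine ge_of_tendsto h ?_
  filter_upwards [self_mem_nhdsWithin] with z hz
  have hxz : x < z := hz
  rw [slope_def_field, div_eq_inv_mul]
  exact mul_nonneg (inv_nonneg.2 (sub_nonneg.2 hxz.le)) (sub_nonneg.2 (hm hxz.le))

lemma my_second_deriv_nonneg (f : E → ℝ) {M : ℕ} (hf : ContDiff ℝ (M : ℕ∞) f)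
    (hM : 2 ≤ M) (hconv : ConvexOn ℝ Set.univ f) (x v : E)
    (hline : iteratedDeriv 2 (fun s : ℝ => f (x + s • v)) 0
      = iteratedFDeriv ℝ 2 f x (fun _ => v)) :
    0 ≤ iteratedFDeriv ℝ 2 f x (fun _ => v) := by
  set φ : ℝ → ℝ := fun s => f (x + s • v) with hφdef
  have hφ : ContDiff ℝ (M : ℕ∞) φ :=
    hf.comp (contDiff_const.add (contDiff_id.smul contDiff_const))
  have hφconv : ConvexOn ℝ Set.univ φ := by
    have h1 := hconv.comp_affineMap (AffineMap.lineMap x (x + v) : ℝ →ᵃ[ℝ] E)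
    have h2 : (f ∘ (AffineMap.lineMap x (x + v) : ℝ →ᵃ[ℝ] E)) = φ := by
      funext s
      simp only [Function.comp_apply, AffineMap.lineMap_apply, vadd_eq_add,
        vsub_eq_sub, add_sub_cancel_left, hφdef]
      exact congrArg f (add_comm _ _)
    rwa [h2, Set.preimage_univ] at h1
  have hφd : ∀ z : ℝ, DifferentiableAt ℝ φ z := by
    intro z
    have h1 : ((1:ℕ):ℕ∞) ≤ (M:ℕ∞) := by exact_mod_cast Nat.one_le_of_lt hM
    have h2 := WithTop.coe_le_coe.mpr h1
    have h3 : (1 : WithTop ℕ∞) = (((1:ℕ):ℕ∞) : WithTop ℕ∞) := by norm_cast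
    exact (hφ.differentiable (by norm_cast; omega)).differentiableAt
  have hmono : Monotone (deriv φ) := by
    have h := hφconv.monotoneOn_deriv (fun z _ => hφd z)
    rwa [monotoneOn_univ] at h
  have hd2 : DifferentiableAt ℝ (deriv φ) 0 := by
    have h2 : ContDiff ℝ ((1 : WithTop ℕ∞) + 1) φ := by
      refine hφ.of_le ?_
      have h1 : ((2:ℕ):ℕ∞) ≤ (M:ℕ∞) := by exact_mod_cast hM
      have h2 := WithTop.coe_le_coe.mpr h1
      have h3 : ((1 : WithTop ℕ∞) + 1) = (((2:ℕ):ℕ∞) : WithTop ℕ∞) := by norm_cast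
      rw [h3]; exact h2
    have := (contDiff_succ_iff_deriv.mp h2).2.2
    exact (this.differentiable (by norm_num)).differentiableAt
  have h0 : 0 ≤ deriv (deriv φ) 0 := my_mono_deriv_nonneg hmono hd2
  have h1 : iteratedDeriv 2 φ 0 = deriv (deriv φ) 0 := by
    rw [show (2 : ℕ) = 1 + 1 from rfl, iteratedDeriv_succ, iteratedDeriv_one]
  rw [← hline]
  rw [hφdef] at h1 ⊢
  rw [h1]
  exact h0

lemma my_itDW_eq {g : ℝ → ℝ} {N : ℕ} (hg : ContDiff ℝ (N : ℕ∞) g) {j : ℕ} (hj : j ≤ N)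
    {s : Set ℝ} (hs : UniqueDiffOn ℝ s) {x : ℝ} (hx : x ∈ s) :
    iteratedDerivWithin j g s x = iteratedDeriv j g x := by
  rw [iteratedDerivWithin_eq_iteratedFDerivWithin, iteratedDeriv_eq_iteratedFDeriv]
  congr 1
  have h1 : HasFTaylorSeriesUpToOn ((N : ℕ∞) : WithTop ℕ∞) g (ftaylorSeriesWithin ℝ g univ) s :=
    ((hg.contDiffOn (s := univ)).ftaylorSeriesWithin uniqueDiffOn_univ).mono (subset_univ s)
  have h2 := h1.eq_iteratedFDerivWithin_of_uniqueDiffOn (m := j) (by exact_mod_cast hj) hs hx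
  rw [← h2]
  simp [ftaylorSeriesWithin, iteratedFDerivWithin_univ]

end Aux

/-- The sum `∑_{k=2}^m (t^{k-2}/(k-2)!) Dᵏf(y)(w^{k-2}, v²)` appearing in condition `(CWᵐ)`. -/
noncomputable def cwSum {n : ℕ} (m : ℕ) (f : EuclideanSpace ℝ (Fin n) → ℝ)
    (y v w : EuclideanSpace ℝ (Fin n)) (t : ℝ) : ℝ :=
  ∑ k ∈ Finset.Icc 2 m,
    (t ^ (k - 2) / (Nat.factorial (k - 2))) *
      iteratedFDeriv ℝ k f y (fun i => if (i : ℕ) < k - 2 then w else v)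

/-- Condition `(CWᵐ)` of Azagra-Mudarra on a set `C`. -/
def CW {n : ℕ} (m : ℕ) (f : EuclideanSpace ℝ (Fin n) → ℝ)
    (C : Set (EuclideanSpace ℝ (Fin n))) : Prop :=
  ∀ ε > (0:ℝ), ∃ tε > (0:ℝ), ∀ y ∈ C, ∀ v w : EuclideanSpace ℝ (Fin n),
    ‖v‖ = 1 → ‖w‖ = 1 → ∀ t : ℝ, 0 < t → t ≤ tε →
      -ε * t ^ (m - 2) ≤ cwSum m f y v w t

/-- If `f ∈ Cᵐ(ℝⁿ)` (`m ≥ 2`) is convex on `ℝⁿ` and `C` is compact, then `f` satisfies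
condition `(CWᵐ)` on `C`. -/
theorem stmt_4 {n : ℕ} (C : Set (EuclideanSpace ℝ (Fin n))) (hCc : IsCompact C)
    (m : ℕ) (hm : 2 ≤ m) (f : EuclideanSpace ℝ (Fin n) → ℝ)
    (hf : ContDiff ℝ (m : ℕ∞) f) (hconv : ConvexOn ℝ Set.univ f) :
    CW m f C := by
  obtain ⟨m₂, rfl⟩ : ∃ m₂, m = m₂ + 2 := ⟨m - 2, by omega⟩
  intro ε hε
  set K := Metric.cthickening 1 C with hKdef
  have hKc : IsCompact K := hCc.cthickening
  have hcont : Continuous (iteratedFDeriv ℝ (m₂+2) f) :=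
    hf.continuous_iteratedFDeriv (by norm_cast)
  obtain ⟨δ, hδ0, hδ⟩ : ∃ δ > (0:ℝ), ∀ a ∈ K, ∀ b ∈ K, dist a b < δ →
      dist (iteratedFDeriv ℝ (m₂+2) f a) (iteratedFDeriv ℝ (m₂+2) f b) < ε := by
    have hUC := hKc.uniformContinuousOn_of_continuous hcont.continuousOn
    rw [Metric.uniformContinuousOn_iff] at hUC
    exact hUC ε hε
  refine ⟨min δ 1, lt_min hδ0 one_pos, ?_⟩
  intro y hy v w hv hw t ht htε
  have hyK : y ∈ K := Metric.self_subset_cthickening C hy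
  have hmem : ∀ s : ℝ, 0 ≤ s → s ≤ 1 → y + s • w ∈ K := by
    intro s hs0 hs1
    refine Metric.mem_cthickening_of_dist_le (y + s • w) y 1 C hy ?_
    rw [dist_eq_norm]
    simp only [add_sub_cancel_left, norm_smul, hw, mul_one, Real.norm_eq_abs]
    rwa [abs_of_nonneg hs0]
  -- the auxiliary scalar functions
  set hfun : EuclideanSpace ℝ (Fin n) → ℝ :=
    fun x => fderiv ℝ (fun x' => fderiv ℝ f x' v) x v with hfun_def
  have hfd1 : ContDiff ℝ ((m₂+1 : ℕ) : ℕ∞) (fderiv ℝ f) :=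
    hf.fderiv_right (by exact_mod_cast le_refl (m₂+2))
  have hA : ContDiff ℝ ((m₂+1 : ℕ) : ℕ∞) (fun x => fderiv ℝ f x v) :=
    (ContinuousLinearMap.apply ℝ ℝ v).contDiff.comp hfd1
  have hhfun : ContDiff ℝ ((m₂ : ℕ) : ℕ∞) hfun := by
    rw [hfun_def]
    exact (ContinuousLinearMap.apply ℝ ℝ v).contDiff.comp
      (hA.fderiv_right (by exact_mod_cast le_refl (m₂+1)))
  set g : ℝ → ℝ := fun s => hfun (y + s • w) with hg_def
  have hgc : ContDiff ℝ ((m₂ : ℕ) : ℕ∞) g := by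
    rw [hg_def]
    exact hhfun.comp (contDiff_const.add (contDiff_id.smul contDiff_const))
  have key : ∀ j : ℕ, j ≤ m₂ → ∀ s : ℝ, iteratedDeriv j g s
      = iteratedFDeriv ℝ (j+2) f (y + s • w) (fun i => if (i:ℕ) < j then w else v) := by
    intro j hj s
    have h1 := my_iteratedDeriv_comp_line hfun hhfun hj y w s
    rw [hg_def, h1, hfun_def]
    exact my_inner_iterated f hf v (by omega) (y + s • w) w
  have hg0 : ∀ s : ℝ, 0 ≤ g s := by
    intro s
    have h3 := key 0 (Nat.zero_le _) s
    have h4 : g s = iteratedFDeriv ℝ 2 f (y + s • w) (fun _ : Fin 2 => v) := by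
      simpa using h3
    rw [h4]
    have hl := my_iteratedDeriv_comp_line f hf (show 2 ≤ m₂ + 2 by omega) (y + s • w) v 0
    simp only [zero_smul, add_zero] at hl
    exact my_second_deriv_nonneg f hf (by omega) hconv (y + s • w) v hl
  have hreindex : ∀ F : ℕ → ℝ,
      ∑ k ∈ Finset.Icc 2 (m₂+2), F k = ∑ j ∈ Finset.range (m₂+1), F (j+2) := by
    intro F
    rw [← Finset.Ico_add_one_right_eq_Icc, Finset.sum_Ico_eq_sum_range]
    have h : m₂ + 2 + 1 - 2 = m₂ + 1 := by omega
    rw [h]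
    exact Finset.sum_congr rfl fun j _ => by rw [Nat.add_comm]
  have hcw : cwSum (m₂+2) f y v w t
      = ∑ j ∈ Finset.range (m₂+1), (t^j / (Nat.factorial j)) * iteratedDeriv j g 0 := by
    rw [cwSum, hreindex (fun k => (t ^ (k - 2) / (Nat.factorial (k - 2))) *
      iteratedFDeriv ℝ k f y (fun i => if (i : ℕ) < k - 2 then w else v))]
    refine Finset.sum_congr rfl fun j hj => ?_
    have hj' : j ≤ m₂ := by
      have := Finset.mem_range.mp hj; omega
    have h5 := key j hj' 0
    simp only [zero_smul, add_zero] at h5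
    simp only [Nat.add_sub_cancel]
    rw [← h5]
  have hexp : m₂ + 2 - 2 = m₂ := by omega
  rw [hexp, hcw]
  rcases Nat.eq_zero_or_pos m₂ with hm0 | hmpos
  · subst hm0
    have hsum0 : ∑ j ∈ Finset.range (0+1), t^j / (Nat.factorial j) * iteratedDeriv j g 0
        = g 0 := by
      simp [iteratedDeriv_zero]
    rw [hsum0]
    simp only [pow_zero]
    linarith [hg0 0]
  · obtain ⟨N, rfl⟩ : ∃ N, m₂ = N + 1 := ⟨m₂ - 1, by omega⟩
    have htIcc : UniqueDiffOn ℝ (Icc (0:ℝ) t) := uniqueDiffOn_Icc ht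
    have hgN : ContDiffOn ℝ ((N:ℕ):ℕ∞) g (Icc 0 t) :=
      (hgc.of_le (by exact_mod_cast Nat.le_succ N)).contDiffOn
    have hdiffN : Differentiable ℝ (iteratedDeriv N g) :=
      ContDiff.differentiable_iteratedDeriv N hgc (by exact_mod_cast Nat.lt_succ_self N)
    have hDO : DifferentiableOn ℝ (iteratedDerivWithin N g (Icc 0 t)) (Ioo 0 t) := by
      refine (hdiffN.differentiableOn).congr ?_
      intro z hz
      exact my_itDW_eq hgc (Nat.le_succ N) htIcc (Ioo_subset_Icc_self hz)
    obtain ⟨ξ, hξ, hT⟩ := taylor_mean_remainder_lagrange (x₀ := 0) (x := t) ht.ne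
      (by rw [Set.uIcc_of_le ht.le]; exact_mod_cast hgN)
      (by rw [Set.uIcc_of_le ht.le, Set.uIoo_of_le ht.le]; exact hDO)
    rw [Set.uIoo_of_le ht.le] at hξ
    rw [Set.uIcc_of_le ht.le] at hT
    have hDW0 : ∀ j, j ≤ N + 1 → iteratedDerivWithin j g (Icc 0 t) 0 = iteratedDeriv j g 0 :=
      fun j hj => my_itDW_eq hgc hj htIcc (left_mem_Icc.mpr ht.le)
    have hDWξ : iteratedDerivWithin (N+1) g (Icc 0 t) ξ = iteratedDeriv (N+1) g ξ :=
      my_itDW_eq hgc le_rfl htIcc (Ioo_subset_Icc_self hξ)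
    have hTay : taylorWithinEval g N (Icc 0 t) 0 t
        = ∑ j ∈ Finset.range (N+1), (t^j / (Nat.factorial j)) * iteratedDeriv j g 0 := by
      rw [taylor_within_apply]
      refine Finset.sum_congr rfl fun j hj => ?_
      have hj' : j ≤ N + 1 := by have := Finset.mem_range.mp hj; omega
      rw [hDW0 j hj', sub_zero, smul_eq_mul]
      ring
    rw [Finset.sum_range_succ, ← hTay]
    set c : ℝ := t^(N+1) / (Nat.factorial (N+1)) with hc_def
    set D0 : ℝ := iteratedDeriv (N+1) g 0 with hD0_def
    set R : ℝ := iteratedDeriv (N+1) g ξ with hR_def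
    have hP : taylorWithinEval g N (Icc 0 t) 0 t = g t - c * R := by
      rw [hDWξ, sub_zero] at hT
      have hcr : c * R = R * t^(N+1) / (Nat.factorial (N+1)) := by rw [hc_def]; ring
      linarith [hT, hcr]
    -- bound on D0 - R
    have hbound : -ε ≤ D0 - R := by
      have hξ0 : (0:ℝ) < ξ := hξ.1
      have hξt : ξ < t := hξ.2
      have hξ1 : ξ ≤ 1 := le_trans hξt.le (le_trans htε (min_le_right _ _))
      have hξδ : ξ < δ := lt_of_lt_of_le hξt (le_trans htε (min_le_left _ _))
      have hzK : y + ξ • w ∈ K := hmem ξ hξ0.le hξ1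
      have hdist : dist y (y + ξ • w) < δ := by
        rw [dist_eq_norm, norm_sub_rev]
        simp only [add_sub_cancel_left, norm_smul, hw, mul_one, Real.norm_eq_abs]
        rwa [abs_of_nonneg hξ0.le]
      have hnear := hδ y hyK (y + ξ • w) hzK hdist
      rw [dist_eq_norm] at hnear
      have hD0 : D0 = iteratedFDeriv ℝ (N+1+2) f y
          (fun i => if (i:ℕ) < N+1 then w else v) := by
        have h := key (N+1) le_rfl 0
        simpa using h
      have hR : R = iteratedFDeriv ℝ (N+1+2) f (y + ξ • w)
          (fun i => if (i:ℕ) < N+1 then w else v) := key (N+1) le_rfl ξ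
      have happ : D0 - R = (iteratedFDeriv ℝ (N+1+2) f y - iteratedFDeriv ℝ (N+1+2) f (y + ξ • w))
          (fun i => if (i:ℕ) < N+1 then w else v) := by
        rw [hD0, hR, ContinuousMultilinearMap.sub_apply]
      have hnorm : ‖D0 - R‖ ≤ ‖iteratedFDeriv ℝ (N+1+2) f y
          - iteratedFDeriv ℝ (N+1+2) f (y + ξ • w)‖ := by
        rw [happ]
        have := (iteratedFDeriv ℝ (N+1+2) f y
          - iteratedFDeriv ℝ (N+1+2) f (y + ξ • w)).le_opNorm
          (fun i => if (i:ℕ) < N+1 then w else v)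
        have hprod : (∏ i : Fin (N+1+2), ‖if (i:ℕ) < N+1 then w else v‖) = 1 := by
          apply Finset.prod_eq_one
          intro i _
          by_cases hi : (i:ℕ) < N+1
          · simp [hi, hw]
          · simp [hi, hv]
        rw [hprod, mul_one] at this
        exact this
      have h8 : |D0 - R| < ε := lt_of_le_of_lt (by rwa [Real.norm_eq_abs] at hnorm) hnear
      linarith [abs_le.mp h8.le]
    have hc0 : 0 ≤ c := by
      rw [hc_def]
      positivity
    have hcle : c ≤ t^(N+1) := by
      rw [hc_def]
      apply div_le_self (by positivity)
      exact_mod_cast Nat.one_le_iff_ne_zero.mpr (Nat.factorial_ne_zero (N+1))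
    have hgt0 : 0 ≤ g t := hg0 t
    have h6 : c * (-ε) ≤ c * (D0 - R) := mul_le_mul_of_nonneg_left hbound hc0
    have h7 : t^(N+1) * (-ε) ≤ c * (-ε) :=
      mul_le_mul_of_nonpos_right hcle (neg_nonpos.mpr hε.le)
    have e : taylorWithinEval g N (Icc 0 t) 0 t + t^(N+1) / (Nat.factorial (N+1)) * D0
        = g t + c * (D0 - R) := by
      rw [hP, hc_def]; ring
    rw [e]
    nlinarith
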